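/- Let P be a simple polygon in ℝ², let d > 0 and ε > 0, and let s_0 ∈ P lie on the boundary of the convex hull of P. Let X ⊆ P be a finite set containing s_0 and every vertex of P, such that any two consecutive points of X along P are at boundary distance at most ε. Suppose there exists a solution for range d containing s_0, and let k be the minimum number of stations among all solutions for range d that contain s_0. Then: (i) every solution for range d whose stations all lie in X and include s_0 has at least k stations; and (ii) there exists a solution for range d + ε whose stations all lie in X, include s_0, and number at most k. In particular, if the minimum numbers of stations among X-station solutions containing s_0 for ranges d and d + ε are equal, then this common value equals k. -/

import Mathlib

/-!
Common setting: simple polygons in the plane, clockwise boundary order,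
drone distance, hop distance, bridges, projections, solutions (sets of base
stations with connecting paths whose concatenation encloses the polygon),
and the greedy (OptSol) sequence.
-/

open scoped ENNReal

noncomputable section

abbrev Plane : Type := EuclideanSpace ℝ (Fin 2)

/-- Twice the signed area of a closed polygonal chain (shoelace formula);
it is negative exactly for clockwise traversal. -/
def shoelace (l : List Plane) : ℝ :=
  ((l.zip (l.rotate 1)).map fun p => p.1 0 * p.2 1 - p.2 0 * p.1 1).sum

/-- A path from `a` to `b` (parametrized on `[0,1]`) whose image lies in `A`. -/
def IsPathIn (A : Set Plane) (a b : Plane) (f : ℝ → Plane) : Prop :=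
  ContinuousOn f (Set.Icc 0 1) ∧ f 0 = a ∧ f 1 = b ∧ f '' Set.Icc 0 1 ⊆ A

/-- Homotopy of paths inside `A`, relative to the endpoints `a`, `b`. -/
def HomotopicRelIn (A : Set Plane) (a b : Plane) (f g : ℝ → Plane) : Prop :=
  ∃ H : ℝ × ℝ → Plane,
    ContinuousOn H (Set.Icc 0 1 ×ˢ Set.Icc 0 1) ∧
    H '' (Set.Icc 0 1 ×ˢ Set.Icc 0 1) ⊆ A ∧
    (∀ t ∈ Set.Icc (0:ℝ) 1, H (0, t) = f t ∧ H (1, t) = g t) ∧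
    (∀ s ∈ Set.Icc (0:ℝ) 1, H (s, 0) = a ∧ H (s, 1) = b)

/-- A loop (as a function on `[0,1]`) is null-homotopic in `A`. -/
def IsNullHomotopicIn (A : Set Plane) (f : ℝ → Plane) : Prop :=
  ∃ H : ℝ × ℝ → Plane,
    ContinuousOn H (Set.Icc 0 1 ×ˢ Set.Icc 0 1) ∧
    H '' (Set.Icc 0 1 ×ˢ Set.Icc 0 1) ⊆ A ∧
    (∀ t ∈ Set.Icc (0:ℝ) 1, H (0, t) = f t) ∧
    (∀ s ∈ Set.Icc (0:ℝ) 1, H (s, 0) = H (s, 1)) ∧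
    ∃ c, ∀ t ∈ Set.Icc (0:ℝ) 1, H (1, t) = c

/-- Concatenation of `k` paths (each parametrized on `[0,1]`) into a single
function parametrized on `[0,1]`. -/
def concatLoop (k : ℕ) (π : ℕ → ℝ → Plane) : ℝ → Plane := fun t =>
  let i : ℕ := min ⌊t * (k : ℝ)⌋₊ (k - 1)
  π i (t * (k : ℝ) - (i : ℝ))

/-- The piecewise-linear path through the points `c 0, c 1, …, c m`,
parametrized on `[0,1]`. -/
def polyPath (m : ℕ) (c : ℕ → Plane) : ℝ → Plane := fun t =>
  let i : ℕ := min ⌊t * (m : ℝ)⌋₊ (m - 1)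
  c i + (t * (m : ℝ) - (i : ℝ)) • (c (i + 1) - c i)

/-- A simple polygon in the plane: a closed polygonal curve `γ : [0, L] → ℝ²`,
parametrized by arclength, injective on `[0, L)`, with finitely many vertices
(the parameters in `vparams`), affine between consecutive vertices, and
traversed clockwise (negative shoelace signed area). -/
structure SimplePolygon where
  L : ℝ
  L_pos : 0 < L
  γ : ℝ → Plane
  continuousOn_γ : ContinuousOn γ (Set.Icc 0 L)
  closed : γ 0 = γ L
  injOn : Set.InjOn γ (Set.Ico 0 L)
  arclength : ∀ ⦃s t : ℝ⦄, 0 ≤ s → s ≤ t → t ≤ L →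
    eVariationOn γ (Set.Icc s t) = ENNReal.ofReal (t - s)
  vparams : Finset ℝ
  vparams_subset : ↑vparams ⊆ Set.Ico 0 L
  zero_mem_vparams : (0 : ℝ) ∈ vparams
  piecewise_linear : ∀ ⦃s t : ℝ⦄, 0 ≤ s → s < t → t ≤ L →
    (∀ w ∈ vparams, w ∉ Set.Ioo s t) →
    ∀ u ∈ Set.Icc s t, γ u = γ s + ((u - s) / (t - s)) • (γ t - γ s)
  clockwise : shoelace ((vparams.sort (· ≤ ·)).map γ) < 0

namespace SimplePolygon

variable (P : SimplePolygon)

/-- The polygon `P`, i.e. the boundary curve, as a subset of the plane. -/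
def toSet : Set Plane := P.γ '' Set.Icc 0 P.L

/-- Periodic extension of the boundary parametrization to all of `ℝ`. -/
def γext (t : ℝ) : Plane := P.γ (Int.fract (t / P.L) * P.L)

/-- `Int(P)`: the union of the bounded components of the complement. -/
def intSet : Set Plane :=
  {p | p ∉ P.toSet ∧ Bornology.IsBounded (connectedComponentIn P.toSetᶜ p)}

/-- `Ext(P)`: the unbounded component of the complement. -/
def extSet : Set Plane :=
  {p | p ∉ P.toSet ∧ ¬ Bornology.IsBounded (connectedComponentIn P.toSetᶜ p)}

/-- `S = P ∪ Ext(P)`. -/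
def region : Set Plane := P.toSet ∪ P.extSet

open Classical in
/-- The parameter in `[0, L)` of a point of the polygon. -/
def param (p : Plane) : ℝ :=
  if h : ∃ t, t ∈ Set.Ico 0 P.L ∧ P.γ t = p then h.choose else 0

/-- Clockwise boundary offset of a point `p` of `P` from the base parameter
`t0`: the point of `P` at offset `0` is the base point, and offsets increase
clockwise up to `L`; `a ⪯ b` (based at `γ t0`) iff
`ordFrom t0 a ≤ ordFrom t0 b`. -/
def ordFrom (t0 : ℝ) (p : Plane) : ℝ :=
  if P.param p < t0 then P.param p + P.L - t0 else P.param p - t0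

/-- The clockwise interval `[a, b]` of the boundary. -/
def interval (a b : Plane) : Set Plane :=
  {p | p ∈ P.toSet ∧ P.ordFrom (P.param a) p ≤ P.ordFrom (P.param a) b}

/-- Clockwise parametrization of the boundary arc between offsets `u ≤ v`
(relative to the base parameter `t0`). -/
def cwParam (t0 u v : ℝ) : ℝ → Plane := fun t => P.γext (t0 + u + t * (v - u))

/-- A clockwise path in `S` between the boundary points at offsets `u ≤ v`
from the base parameter `t0`: a path in `S` homotopic rel endpoints, within
`S`, to the clockwise boundary arc from offset `u` to offset `v`. -/
def IsCWPath (t0 u v : ℝ) (f : ℝ → Plane) : Prop :=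
  IsPathIn P.region (P.γext (t0 + u)) (P.γext (t0 + v)) f ∧
  HomotopicRelIn P.region (P.γext (t0 + u)) (P.γext (t0 + v)) f (P.cwParam t0 u v)

/-- The drone distance `δ` between the boundary points at offsets `u ≤ v`
(relative to the base parameter `t0`): the infimum of lengths (total
variations) of clockwise paths. -/
def droneDistO (t0 u v : ℝ) : ℝ≥0∞ :=
  sInf {l | ∃ f : ℝ → Plane, P.IsCWPath t0 u v f ∧ eVariationOn f (Set.Icc 0 1) = l}

/-- A monotone chain of `k` hops, each of drone distance at most `d`. -/
def HopChainLE (t0 d u v : ℝ) (k : ℕ) : Prop :=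
  ∃ q : ℕ → ℝ, q 0 = u ∧ q k = v ∧ (∀ i ≤ k, q i ∈ Set.Icc 0 P.L) ∧
    (∀ i < k, q i ≤ q (i + 1)) ∧
    (∀ i < k, P.droneDistO t0 (q i) (q (i + 1)) ≤ ENNReal.ofReal d)

/-- The hop distance `δ_d` between offsets `u ≤ v`: the least number of hops
of drone distance at most `d` each, in a monotone chain from `u` to `v`. -/
def hopDistO (t0 d u v : ℝ) : ℕ∞ :=
  sInf {n : ℕ∞ | ∃ m : ℕ, n = m ∧ P.HopChainLE t0 d u v m}

/-- `p` is a vertex of `P`. -/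
def IsVertex (p : Plane) : Prop := ∃ u ∈ P.vparams, P.γ u = p

/-- `u`, `v` are the parameters of the endpoints of an edge of the polygon. -/
def IsEdgeParams (u v : ℝ) : Prop :=
  u ∈ P.vparams ∧ (v ∈ P.vparams ∨ v = P.L) ∧ u < v ∧ v ≤ P.L ∧
    ∀ w ∈ P.vparams, w ∉ Set.Ioo u v

/-- A bridge: an open segment contained in `Ext(P)` with endpoints on `P`. -/
def IsBridge (a b : Plane) : Prop :=
  a ≠ b ∧ a ∈ P.toSet ∧ b ∈ P.toSet ∧ openSegment ℝ a b ⊆ P.extSet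

/-- `x` is the projection of a vertex of `P` onto an edge of `P`, relative to
the base parameter `t0` and the range `d`. -/
def IsVertexProjection (t0 d : ℝ) (x : Plane) : Prop :=
  ∃ u v p, P.IsEdgeParams u v ∧ x ∈ P.γ '' Set.Icc u v ∧ P.IsVertex p ∧
    P.ordFrom t0 x ≤ P.ordFrom t0 p ∧ P.IsBridge x p ∧ dist x p ≤ d ∧
    inner ℝ (p - x) (P.γ v - P.γ u) = (0 : ℝ)

/-- `x` is the `d`-projection of an edge of `P` onto an edge of `P`. -/
def IsEdgeDProjection (d : ℝ) (x : Plane) : Prop :=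
  ∃ u v u' v' y, P.IsEdgeParams u v ∧ P.IsEdgeParams u' v' ∧
    x ∈ P.γ '' Set.Icc u v ∧ y ∈ P.γ '' Set.Icc u' v' ∧
    P.IsBridge x y ∧ dist x y = d ∧ inner ℝ (y - x) (P.γ v - P.γ u) = (0 : ℝ)

/-- `x` is orthogonally visible from the edge of `P` with parameters `u, v`:
some point `q` of that edge is joined to `x` by a segment perpendicular to
the edge whose relative interior lies in `Ext(P)`. -/
def OrthVisibleFrom (u v : ℝ) (x : Plane) : Prop :=
  ∃ q ∈ P.γ '' Set.Icc u v, inner ℝ (x - q) (P.γ v - P.γ u) = (0 : ℝ) ∧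
    openSegment ℝ q x ⊆ P.extSet

/-- A solution with `k` stations for range `d`: stations `s 0, …, s (k-1)` on
`P`, connected cyclically by paths `π i` in `S` of length at most `d`, whose
concatenation encloses `P` (is not null-homotopic in `ℝ² \ {q}` for any
`q ∈ Int(P)`). -/
def IsSolution (d : ℝ) (k : ℕ) (s : ℕ → Plane) (π : ℕ → ℝ → Plane) : Prop :=
  0 < k ∧ (∀ i < k, s i ∈ P.toSet) ∧
  (∀ i < k, IsPathIn P.region (s i) (s ((i + 1) % k)) (π i)) ∧
  (∀ i < k, eVariationOn (π i) (Set.Icc 0 1) ≤ ENNReal.ofReal d) ∧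
  ∀ q ∈ P.intSet, ¬ IsNullHomotopicIn {x : Plane | x ≠ q} (concatLoop k π)

/-- The greedy sequence of the `OptSol` algorithm, in boundary offsets from
the base parameter `t0` (offset `0` is the base station `s_0`, offset `L` is
its wrap-around copy `s_0'`): `y 0` is the ⪯-greatest point at drone distance
at most `d` from `s 0 = 0`; for `i ≥ 1`, `y i` is the ⪯-greatest point at hop
distance at most `2` from `s (i-1)`, and `s i` is any point within drone
distance `d` of both `s (i-1)` and `y i`. -/
def IsGreedy (t0 d : ℝ) (s y : ℕ → ℝ) : Prop :=
  s 0 = 0 ∧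
  (y 0 ∈ Set.Icc 0 P.L ∧ P.droneDistO t0 0 (y 0) ≤ ENNReal.ofReal d ∧
    ∀ v ∈ Set.Icc 0 P.L, P.droneDistO t0 0 v ≤ ENNReal.ofReal d → v ≤ y 0) ∧
  ∀ i : ℕ, 1 ≤ i →
    (y i ∈ Set.Icc 0 P.L ∧ P.hopDistO t0 d (s (i - 1)) (y i) ≤ 2 ∧
      ∀ v ∈ Set.Icc 0 P.L, P.hopDistO t0 d (s (i - 1)) v ≤ 2 → v ≤ y i) ∧
    s i ∈ Set.Icc 0 P.L ∧ s (i - 1) ≤ s i ∧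
    P.droneDistO t0 (s (i - 1)) (s i) ≤ ENNReal.ofReal d ∧
    s i ≤ y i ∧ P.droneDistO t0 (s i) (y i) ≤ ENNReal.ofReal d

end SimplePolygon
open Set

section Helpers

/-- Gluing continuity on a union of two closed sets. -/
theorem glue_closed {α β : Type*} [TopologicalSpace α] [TopologicalSpace β]
    {f : α → β} {A B : Set α} (hA : IsClosed A) (hB : IsClosed B)
    (ha : ContinuousOn f A) (hb : ContinuousOn f B) : ContinuousOn f (A ∪ B) := by
  intro x hx
  have cwa : ∀ {C : Set α}, IsClosed C → ContinuousOn f C → ContinuousWithinAt f C x := by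
    intro C hC hfC
    by_cases hxC : x ∈ C
    · exact hfC x hxC
    · exact continuousWithinAt_of_notMem_closure (by rwa [hC.closure_eq])
  exact (cwa hA ha).union (cwa hB hb)

theorem affine_image_Icc_of_pos {m c p q : ℝ} (hm : 0 < m) (hpq : p ≤ q) :
    (fun t => c + m * t) '' Icc p q = Icc (c + m * p) (c + m * q) := by
  ext y
  constructor
  · rintro ⟨x, ⟨hx1, hx2⟩, rfl⟩
    dsimp only
    constructor <;> nlinarith
  · rintro ⟨h1, h2⟩
    have hm' : m ≠ 0 := ne_of_gt hm
    refine ⟨(y - c) / m, ⟨?_, ?_⟩, ?_⟩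
    · rw [le_div_iff₀ hm]; nlinarith
    · rw [div_le_iff₀ hm]; nlinarith
    · dsimp only; field_simp; ring

theorem affine_image_Icc_of_neg {m c p q : ℝ} (hm : m < 0) (hpq : p ≤ q) :
    (fun t => c + m * t) '' Icc p q = Icc (c + m * q) (c + m * p) := by
  ext y
  constructor
  · rintro ⟨x, ⟨hx1, hx2⟩, rfl⟩
    dsimp only
    constructor <;> nlinarith
  · rintro ⟨h1, h2⟩
    have hm' : m ≠ 0 := ne_of_lt hm
    refine ⟨(y - c) / m, ⟨?_, ?_⟩, ?_⟩
    · rw [le_div_iff_of_neg hm]; nlinarith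
    · rw [div_le_iff_of_neg hm]; nlinarith
    · dsimp only; field_simp; ring

/-- index and remainder facts for `concatLoop`. -/
theorem concat_index {k : ℕ} (hk : 0 < k) {t : ℝ} (ht : t ∈ Icc (0:ℝ) 1) :
    min ⌊t * (k : ℝ)⌋₊ (k - 1) < k ∧
      (0:ℝ) ≤ t * (k : ℝ) - (min ⌊t * (k : ℝ)⌋₊ (k - 1) : ℕ) ∧
      t * (k : ℝ) - (min ⌊t * (k : ℝ)⌋₊ (k - 1) : ℕ) ≤ 1 := by
  have htk0 : (0:ℝ) ≤ t * k := mul_nonneg ht.1 (Nat.cast_nonneg k)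
  have htk1 : t * (k : ℝ) ≤ k := by
    nlinarith [ht.2, Nat.cast_nonneg (α := ℝ) k]
  refine ⟨lt_of_le_of_lt (min_le_right _ _) (Nat.sub_lt hk one_pos), ?_, ?_⟩
  · have h1 : (min ⌊t * (k : ℝ)⌋₊ (k - 1) : ℕ) ≤ ⌊t * (k : ℝ)⌋₊ := min_le_left _ _
    have h2 : ((⌊t * (k : ℝ)⌋₊ : ℕ) : ℝ) ≤ t * k := Nat.floor_le htk0
    have : ((min ⌊t * (k : ℝ)⌋₊ (k - 1) : ℕ) : ℝ) ≤ (⌊t * (k : ℝ)⌋₊ : ℝ) := Nat.cast_le.2 h1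
    linarith
  · rcases le_or_gt (⌊t * (k : ℝ)⌋₊) (k - 1) with h | h
    · rw [min_eq_left h]
      have := Nat.lt_floor_add_one (t * (k : ℝ))
      linarith
    · rw [min_eq_right h.le]
      have hk1 : ((k - 1 : ℕ) : ℝ) = (k : ℝ) - 1 := by
        have : (1:ℕ) ≤ k := hk
        push_cast [Nat.cast_sub this]
        ring
      rw [hk1]; linarith

theorem concatLoop_eval (k : ℕ) (g : ℕ → ℝ → Plane) (t : ℝ) :
    concatLoop k g t
      = g (min ⌊t * (k : ℝ)⌋₊ (k - 1)) (t * (k : ℝ) - (min ⌊t * (k : ℝ)⌋₊ (k - 1) : ℕ)) := rfl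

theorem concat_congr {k : ℕ} (hk : 0 < k) {f g : ℕ → ℝ → Plane}
    (h : ∀ i < k, ∀ u ∈ Icc (0:ℝ) 1, f i u = g i u) :
    ∀ t ∈ Icc (0:ℝ) 1, concatLoop k f t = concatLoop k g t := by
  intro t ht
  obtain ⟨h1, h2, h3⟩ := concat_index hk ht
  rw [concatLoop_eval, concatLoop_eval]
  exact h _ h1 _ ⟨h2, h3⟩

theorem concat_mem {k : ℕ} (hk : 0 < k) {f : ℕ → ℝ → Plane} {A : Set Plane}
    (h : ∀ i < k, ∀ u ∈ Icc (0:ℝ) 1, f i u ∈ A) :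
    ∀ t ∈ Icc (0:ℝ) 1, concatLoop k f t ∈ A := by
  intro t ht
  obtain ⟨h1, h2, h3⟩ := concat_index hk ht
  rw [concatLoop_eval]
  exact h _ h1 _ ⟨h2, h3⟩

theorem concat_zero (k : ℕ) (g : ℕ → ℝ → Plane) :
    concatLoop k g 0 = g 0 0 := by
  rw [concatLoop_eval]
  norm_num

theorem concat_one {k : ℕ} (hk : 0 < k) (g : ℕ → ℝ → Plane) :
    concatLoop k g 1 = g (k - 1) 1 := by
  rw [concatLoop_eval]
  have h1 : (1:ℝ) * (k:ℝ) = (k:ℝ) := one_mul _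
  have hfl : ⌊(1:ℝ) * (k:ℝ)⌋₊ = k := by rw [h1]; exact Nat.floor_natCast k
  rw [hfl, min_eq_right (Nat.sub_le k 1)]
  have h2 : ((k - 1 : ℕ) : ℝ) = (k : ℝ) - 1 := by
    have : (1:ℕ) ≤ k := hk
    push_cast [Nat.cast_sub this]; ring
  rw [h1, h2]
  norm_num

end Helpers
namespace SimplePolygon

variable (P : SimplePolygon)

theorem γext_mem (t : ℝ) : P.γext t ∈ P.toSet := by
  refine ⟨Int.fract (t / P.L) * P.L, ⟨?_, ?_⟩, rfl⟩
  · exact mul_nonneg (Int.fract_nonneg _) P.L_pos.le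
  · nlinarith [Int.fract_lt_one (t / P.L), P.L_pos]

theorem γext_eq_of_Icc {t : ℝ} (h : t ∈ Set.Icc 0 P.L) : P.γext t = P.γ t := by
  rcases eq_or_lt_of_le h.2 with h2 | h2
  · have : t / P.L = 1 := by rw [h2]; exact div_self P.L_pos.ne'
    unfold γext
    rw [this]
    norm_num
    rw [P.closed, h2]
  · unfold γext
    have : Int.fract (t / P.L) = t / P.L := Int.fract_eq_self.2
      ⟨div_nonneg h.1 P.L_pos.le, (div_lt_one P.L_pos).2 h2⟩
    rw [this, div_mul_cancel₀ _ P.L_pos.ne']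

theorem γext_eq_of_Icc' {t : ℝ} (h : t ∈ Set.Icc P.L (2 * P.L)) :
    P.γext t = P.γ (t - P.L) := by
  have key : P.γext t = P.γext (t - P.L) := by
    unfold γext
    have h1 : (t - P.L) / P.L = t / P.L - 1 := by
      rw [sub_div, div_self P.L_pos.ne']
    have h2 : Int.fract (t / P.L) = Int.fract (t / P.L - 1) := by
      rw [show t / P.L - 1 = t / P.L + (-1 : ℤ) by push_cast; ring, Int.fract_add_intCast]
    rw [h1, h2]
  rw [key]
  exact P.γext_eq_of_Icc ⟨by linarith [h.1], by linarith [h.2]⟩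

theorem γext_continuousOn : ContinuousOn P.γext (Set.Icc 0 (2 * P.L)) := by
  have hL : 0 ≤ P.L := P.L_pos.le
  have hcover : Set.Icc (0:ℝ) (2 * P.L) = Set.Icc 0 P.L ∪ Set.Icc P.L (2 * P.L) :=
    (Set.Icc_union_Icc_eq_Icc hL (by linarith)).symm
  rw [hcover]
  apply glue_closed isClosed_Icc isClosed_Icc
  · exact P.continuousOn_γ.congr fun t ht => P.γext_eq_of_Icc ht
  · have : ContinuousOn (fun t => P.γ (t - P.L)) (Set.Icc P.L (2 * P.L)) := by
      apply P.continuousOn_γ.comp ((continuous_id.sub continuous_const).continuousOn)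
      intro t ht
      simp only [Pi.sub_apply, id_eq]
      exact ⟨by linarith [ht.1], by linarith [ht.2]⟩
    exact this.congr fun t ht => P.γext_eq_of_Icc' ht

theorem γext_evar {s t : ℝ} (h0 : 0 ≤ s) (hst : s ≤ t) (h2 : t ≤ 2 * P.L) :
    eVariationOn P.γext (Set.Icc s t) = ENNReal.ofReal (t - s) := by
  have hL : 0 < P.L := P.L_pos
  have caseA : ∀ u v : ℝ, 0 ≤ u → u ≤ v → v ≤ P.L →
      eVariationOn P.γext (Set.Icc u v) = ENNReal.ofReal (v - u) := by
    intro u v hu huv hv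
    rw [eVariationOn.eq_of_eqOn (fun x hx =>
      P.γext_eq_of_Icc ⟨le_trans hu hx.1, le_trans hx.2 hv⟩)]
    exact P.arclength hu huv hv
  have caseB : ∀ u v : ℝ, P.L ≤ u → u ≤ v → v ≤ 2 * P.L →
      eVariationOn P.γext (Set.Icc u v) = ENNReal.ofReal (v - u) := by
    intro u v hu huv hv
    rw [eVariationOn.eq_of_eqOn (fun x hx =>
      P.γext_eq_of_Icc' ⟨le_trans hu hx.1, le_trans hx.2 hv⟩)]
    have hmono : MonotoneOn (fun x : ℝ => x - P.L) (Set.Icc u v) :=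
      fun a _ b _ hab => by simpa using hab
    have := eVariationOn.comp_eq_of_monotoneOn P.γ (fun x : ℝ => x - P.L) hmono
    rw [show (fun x => P.γ (x - P.L)) = P.γ ∘ (fun x : ℝ => x - P.L) from rfl, this,
      Set.image_sub_const_Icc]
    have := P.arclength (s := u - P.L) (t := v - P.L) (by linarith) (by linarith) (by linarith)
    rw [this]
    congr 1
    ring
  rcases le_or_gt t P.L with h | h
  · exact caseA s t h0 hst h
  rcases le_or_gt P.L s with h' | h'
  · exact caseB s t h' hst h2
  · have key := eVariationOn.Icc_add_Icc (f := P.γext) (s := Set.Icc s t)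
      (a := s) (b := P.L) (c := t) h'.le h.le ⟨h'.le, h.le⟩
    have e1 : Set.Icc s t ∩ Set.Icc s P.L = Set.Icc s P.L := by
      rw [Set.Icc_inter_Icc]
      rw [max_self, min_eq_right h.le]
    have e2 : Set.Icc s t ∩ Set.Icc P.L t = Set.Icc P.L t := by
      rw [Set.Icc_inter_Icc]
      rw [min_self, max_eq_right h'.le]
    have e3 : Set.Icc s t ∩ Set.Icc s t = Set.Icc s t := Set.inter_self _
    rw [e1, e2, e3] at key
    rw [← key, caseA s P.L h0 h'.le le_rfl, caseB P.L t le_rfl h.le h2,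
      ← ENNReal.ofReal_add (by linarith) (by linarith)]
    congr 1
    ring

theorem param_spec {p : Plane} (hp : p ∈ P.toSet) :
    P.param p ∈ Set.Ico 0 P.L ∧ P.γ (P.param p) = p := by
  have hex : ∃ t, t ∈ Set.Ico 0 P.L ∧ P.γ t = p := by
    obtain ⟨u, hu, rfl⟩ := hp
    rcases eq_or_lt_of_le hu.2 with h | h
    · exact ⟨0, ⟨le_rfl, P.L_pos⟩, by rw [P.closed, h]⟩
    · exact ⟨u, ⟨hu.1, h⟩, rfl⟩
  unfold param
  rw [dif_pos hex]
  exact hex.choose_spec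

theorem ordFrom_spec {t0 : ℝ} (ht0 : t0 ∈ Set.Ico 0 P.L) {p : Plane} (hp : p ∈ P.toSet) :
    P.ordFrom t0 p ∈ Set.Ico 0 P.L ∧ P.γext (t0 + P.ordFrom t0 p) = p := by
  obtain ⟨hpar, hγ⟩ := P.param_spec hp
  unfold ordFrom
  split_ifs with h
  · refine ⟨⟨by linarith [hpar.1, ht0.2], by linarith [ht0.1, hpar.2]⟩, ?_⟩
    have harg : t0 + (P.param p + P.L - t0) = P.param p + P.L := by ring
    rw [harg, P.γext_eq_of_Icc' ⟨by linarith [hpar.1], by linarith [hpar.2]⟩]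
    simpa using hγ
  · push_neg at h
    refine ⟨⟨by linarith, by linarith [hpar.2, ht0.1]⟩, ?_⟩
    have harg : t0 + (P.param p - t0) = P.param p := by ring
    rw [harg, P.γext_eq_of_Icc ⟨hpar.1, hpar.2.le⟩]
    exact hγ

end SimplePolygon
open Set in
theorem snap_exists (P : SimplePolygon) {ε : ℝ} (hε : 0 < ε)
    (X : Finset ℝ) (hX0 : (0 : ℝ) ∈ X) (hXsub : ↑X ⊆ Set.Ico 0 P.L)
    (hgap : ∀ a ∈ X, ∀ b ∈ insert P.L X, a < b →
      (∀ c ∈ X, c ∉ Set.Ioo a b) → b - a ≤ ε) :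
    ∃ sn : ℝ → ℝ, ∀ w ∈ Set.Ico 0 P.L,
      sn w ∈ Set.Icc 0 P.L ∧ |sn w - w| ≤ ε / 2 ∧ (sn w ∈ X ∨ sn w = P.L) ∧
      (w ∈ X → sn w = w) := by
  classical
  have key : ∀ w : ℝ, ∃ v : ℝ, w ∈ Set.Ico 0 P.L →
      (v ∈ Set.Icc 0 P.L ∧ |v - w| ≤ ε / 2 ∧ (v ∈ X ∨ v = P.L) ∧ (w ∈ X → v = w)) := by
    intro w
    by_cases hw : w ∈ Set.Ico 0 P.L
    swap
    · exact ⟨0, fun h => absurd h hw⟩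
    by_cases hwX : w ∈ X
    · exact ⟨w, fun _ => ⟨⟨hw.1, hw.2.le⟩, by simpa using le_of_lt (half_pos hε),
        Or.inl hwX, fun _ => rfl⟩⟩
    · set A : Finset ℝ := X.filter (· ≤ w) with hA
      have hAne : A.Nonempty := ⟨0, by simp [hA, hX0, hw.1]⟩
      set a := A.max' hAne with ha
      have haA : a ∈ A := A.max'_mem hAne
      have haX : a ∈ X := (Finset.mem_filter.1 haA).1
      have haw : a ≤ w := (Finset.mem_filter.1 haA).2
      set B : Finset ℝ := (insert P.L X).filter (w ≤ ·) with hB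
      have hBne : B.Nonempty := ⟨P.L, by simp [hB, hw.2.le]⟩
      set b := B.min' hBne with hb
      have hbB : b ∈ B := B.min'_mem hBne
      have hbX : b ∈ insert P.L X := (Finset.mem_filter.1 hbB).1
      have hwb : w ≤ b := (Finset.mem_filter.1 hbB).2
      have haw' : a < w := lt_of_le_of_ne haw (fun h => hwX (h ▸ haX))
      have hwb' : w < b := lt_of_le_of_ne hwb (by
        intro h
        rcases Finset.mem_insert.1 hbX with h' | h'
        · exact absurd (h ▸ h') (ne_of_lt hw.2)
        · exact hwX (h ▸ h'))
      have hnb : ∀ c ∈ X, c ∉ Set.Ioo a b := by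
        intro c hc ⟨hc1, hc2⟩
        rcases le_or_gt c w with h | h
        · exact absurd (Finset.le_max' A c (Finset.mem_filter.2 ⟨hc, h⟩)) (not_le.2 hc1)
        · exact absurd (Finset.min'_le B c
            (Finset.mem_filter.2 ⟨Finset.mem_insert.2 (Or.inr hc), h.le⟩)) (not_le.2 hc2)
      have hba : b - a ≤ ε := hgap a haX b hbX (lt_trans haw' hwb') hnb
      have ha0 : 0 ≤ a := (hXsub haX).1
      have hbL : b ≤ P.L := by
        rcases Finset.mem_insert.1 hbX with h' | h'
        · exact le_of_eq h'
        · exact (hXsub h').2.le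
      refine ⟨if w - a ≤ b - w then a else b, fun _ => ?_⟩
      split_ifs with hcl
      · refine ⟨⟨ha0, le_trans haw hw.2.le⟩, ?_, Or.inl haX, fun h => absurd h hwX⟩
        rw [abs_of_nonpos (by linarith)]
        linarith
      · refine ⟨⟨by linarith, hbL⟩, ?_, ?_, fun h => absurd h hwX⟩
        · rw [abs_of_nonneg (by linarith)]
          linarith
        · rcases Finset.mem_insert.1 hbX with h' | h'
          · exact Or.inr h'
          · exact Or.inl h'
  choose sn hsn using key
  exact ⟨sn, fun w hw => hsn w hw⟩

open Set in
theorem strip_cont {k : ℕ} (hk : 0 < k) (Φ : ℕ → ℝ → ℝ → Plane)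
    (hcont : ∀ i < k, ContinuousOn (fun p : ℝ × ℝ => Φ i p.1 p.2) (Icc 0 1 ×ˢ Icc 0 1))
    (hmatch : ∀ i, i + 1 < k → ∀ s ∈ Icc (0:ℝ) 1, Φ i s 1 = Φ (i + 1) s 0) :
    ContinuousOn (fun p : ℝ × ℝ => concatLoop k (fun j => Φ j p.1) p.2)
      (Icc 0 1 ×ˢ Icc 0 1) := by
  have hkR : (0:ℝ) < k := Nat.cast_pos.2 hk
  have hstrip : ∀ j < k, ContinuousOn (fun p : ℝ × ℝ => concatLoop k (fun j => Φ j p.1) p.2)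
      (Icc 0 1 ×ˢ Icc ((j:ℝ)/k) (((j:ℝ)+1)/k)) := by
    intro j hj
    have heq : EqOn (fun p : ℝ × ℝ => concatLoop k (fun j => Φ j p.1) p.2)
        (fun p : ℝ × ℝ => Φ j p.1 (p.2 * k - j))
        (Icc 0 1 ×ˢ Icc ((j:ℝ)/k) (((j:ℝ)+1)/k)) := by
      rintro ⟨s, t⟩ ⟨hs, ht⟩
      simp only
      rw [concatLoop_eval]
      have htj : (j:ℝ) ≤ t * k := by
        have := ht.1
        rw [div_le_iff₀ hkR] at this
        linarith
      have htj1 : t * k ≤ (j:ℝ) + 1 := by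
        have := ht.2
        rw [le_div_iff₀ hkR] at this
        linarith
      rcases lt_or_eq_of_le htj1 with hlt | heq1
      · have hfl : ⌊t * (k:ℝ)⌋₊ = j := by
          rw [Nat.floor_eq_iff (by linarith)]
          exact ⟨htj, hlt⟩
        rw [hfl, min_eq_left (by omega)]
      · have hfl : ⌊t * (k:ℝ)⌋₊ = j + 1 := by
          rw [Nat.floor_eq_iff (by linarith)]
          constructor
          · push_cast
            linarith
          · push_cast
            linarith
        rw [hfl]
        rcases lt_or_eq_of_le (Nat.succ_le_of_lt hj) with h' | h'
        · rw [min_eq_left (by omega)]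
          have e1 : t * (k:ℝ) - ((j + 1 : ℕ):ℝ) = 0 := by push_cast; linarith
          have e2 : t * (k:ℝ) - (j:ℝ) = 1 := by linarith
          rw [e1, e2]
          exact (hmatch j (by omega) s hs).symm
        · rw [min_eq_right (by omega), show k - 1 = j by omega]
    have hc2 : ContinuousOn (fun p : ℝ × ℝ => Φ j p.1 (p.2 * k - j))
        (Icc 0 1 ×ˢ Icc ((j:ℝ)/k) (((j:ℝ)+1)/k)) := by
      have hmap : MapsTo (fun p : ℝ × ℝ => (p.1, p.2 * k - (j:ℝ)))
          (Icc 0 1 ×ˢ Icc ((j:ℝ)/k) (((j:ℝ)+1)/k)) (Icc 0 1 ×ˢ Icc (0:ℝ) 1) := by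
        rintro ⟨s, t⟩ ⟨hs, ht⟩
        have h1 := ht.1
        have h2 := ht.2
        rw [div_le_iff₀ hkR] at h1
        rw [le_div_iff₀ hkR] at h2
        exact ⟨hs, by constructor <;> simp <;> linarith⟩
      exact (hcont j hj).comp
        (Continuous.continuousOn (by continuity)) hmap
    exact hc2.congr heq
  have main : ∀ m : ℕ, m ≤ k → 1 ≤ m →
      ContinuousOn (fun p : ℝ × ℝ => concatLoop k (fun j => Φ j p.1) p.2)
        (Icc 0 1 ×ˢ Icc 0 ((m:ℝ)/k)) := by
    intro m
    induction m with
    | zero => intro _ h; omega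
    | succ n IH =>
      intro hmk _
      rcases Nat.eq_zero_or_pos n with rfl | hn
      · have := hstrip 0 hk
        norm_num at this ⊢
        exact this
      · have h1 : Icc (0:ℝ) (((n+1:ℕ):ℝ)/k)
            = Icc 0 ((n:ℝ)/k) ∪ Icc ((n:ℝ)/k) (((n:ℝ)+1)/k) := by
          rw [Icc_union_Icc_eq_Icc (div_nonneg (Nat.cast_nonneg n) hkR.le)
            (by gcongr; linarith)]
          norm_num
        rw [h1, Set.prod_union]
        exact glue_closed (isClosed_Icc.prod isClosed_Icc) (isClosed_Icc.prod isClosed_Icc)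
          (IH (by omega) hn) (hstrip n (by omega))
  have := main k le_rfl hk
  rwa [div_self hkR.ne'] at this
open Set

/-- Boundary arc from offset `w j` to offset `a j` (based at `t0`). -/
private def Bfun (P : SimplePolygon) (t0 : ℝ) (w a : ℕ → ℝ) (j : ℕ) (u : ℝ) : Plane :=
  P.γext (t0 + w j + u * (a j - w j))

/-- The spike-growing family of paths. -/
private def FamF (P : SimplePolygon) (t0 : ℝ) (w a : ℕ → ℝ) (πp : ℕ → ℝ → Plane)
    (s : ℝ) (i : ℕ) (t : ℝ) : Plane :=
  if t ≤ s / 4 then Bfun P t0 w a i (s - 4 * t)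
  else if t ≤ 1 - s / 4 then πp i ((t - s / 4) / (1 - s / 2))
  else Bfun P t0 w a (i + 1) (4 * t - 4 + s)

section FamLemmas

variable {P : SimplePolygon} {t0 : ℝ} {w a : ℕ → ℝ} {πp : ℕ → ℝ → Plane}

private theorem Bfun_arg_mem (ht0 : t0 ∈ Set.Ico 0 P.L)
    (hw : ∀ i, w i ∈ Set.Ico 0 P.L) (ha : ∀ i, a i ∈ Set.Icc 0 P.L) (j : ℕ) {u : ℝ} (hu : u ∈ Icc (0:ℝ) 1) :
    t0 + w j + u * (a j - w j) ∈ Icc 0 (2 * P.L) := by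
  obtain ⟨hw1, hw2⟩ := hw j
  obtain ⟨ha1, ha2⟩ := ha j
  obtain ⟨ht1, ht2⟩ := ht0
  constructor
  · nlinarith [hu.1, hu.2]
  · nlinarith [hu.1, hu.2]

private theorem Bfun_mem (j : ℕ) (u : ℝ) : Bfun P t0 w a j u ∈ P.region :=
  Or.inl (P.γext_mem _)

private theorem Bfun_zero (j : ℕ) : Bfun P t0 w a j 0 = P.γext (t0 + w j) := by
  unfold Bfun
  norm_num

private theorem Bfun_one (j : ℕ) : Bfun P t0 w a j 1 = P.γext (t0 + a j) := by
  unfold Bfun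
  congr 1
  ring

private theorem Fam_start {s : ℝ} (hs : s ∈ Icc (0:ℝ) 1) (i : ℕ) :
    FamF P t0 w a πp s i 0 = Bfun P t0 w a i s := by
  unfold FamF
  rw [if_pos (by linarith [hs.1])]
  norm_num

private theorem Fam_end (hπ1 : ∀ i, πp i 1 = P.γext (t0 + w (i + 1)))
    {s : ℝ} (hs : s ∈ Icc (0:ℝ) 1) (i : ℕ) :
    FamF P t0 w a πp s i 1 = Bfun P t0 w a (i + 1) s := by
  unfold FamF
  rw [if_neg (by push_neg; linarith [hs.2])]
  rcases eq_or_lt_of_le hs.1 with h0 | h0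
  · rw [if_pos (by linarith)]
    rw [← h0]
    norm_num
    rw [hπ1 i, Bfun_zero]
  · rw [if_neg (by push_neg; linarith)]
    congr 1
    ring

private theorem Fam_zero (hπ0 : ∀ i, πp i 0 = P.γext (t0 + w i))
    (i : ℕ) {u : ℝ} (hu : u ∈ Icc (0:ℝ) 1) :
    FamF P t0 w a πp 0 i u = πp i u := by
  unfold FamF
  rcases eq_or_lt_of_le hu.1 with h0 | h0
  · rw [if_pos (by linarith)]
    rw [← h0]
    norm_num
    rw [hπ0 i, Bfun_zero]
  · rw [if_neg (by push_neg; linarith), if_pos (by linarith [hu.2])]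
    norm_num

private theorem Fam_mem (hπimg : ∀ i, πp i '' Icc 0 1 ⊆ P.region)
    (i : ℕ) {s t : ℝ} (hs : s ∈ Icc (0:ℝ) 1) (ht : t ∈ Icc (0:ℝ) 1) :
    FamF P t0 w a πp s i t ∈ P.region := by
  unfold FamF
  split_ifs with h1 h2
  · exact Bfun_mem i _
  · apply hπimg i
    refine ⟨(t - s / 4) / (1 - s / 2), ⟨?_, ?_⟩, rfl⟩
    · apply div_nonneg (by linarith [not_le.1 h1]) (by linarith [hs.2])
    · rw [div_le_one (by linarith [hs.2])]
      linarith
  · exact Bfun_mem (i + 1) _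

private theorem Fam_cont (ht0 : t0 ∈ Set.Ico 0 P.L)
    (hw : ∀ i, w i ∈ Set.Ico 0 P.L) (ha : ∀ i, a i ∈ Set.Icc 0 P.L) (hπcont : ∀ i, ContinuousOn (πp i) (Icc 0 1))
    (hπ0 : ∀ i, πp i 0 = P.γext (t0 + w i))
    (hπ1 : ∀ i, πp i 1 = P.γext (t0 + w (i + 1)))
    (i : ℕ) :
    ContinuousOn (fun p : ℝ × ℝ => FamF P t0 w a πp p.1 i p.2) (Icc 0 1 ×ˢ Icc 0 1) := by
  have hBc : ∀ (j : ℕ) (S : Set (ℝ × ℝ)) (g : ℝ × ℝ → ℝ), Continuous g →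
      (∀ p ∈ S, g p ∈ Icc (0:ℝ) 1) →
      ContinuousOn (fun p : ℝ × ℝ => Bfun P t0 w a j (g p)) S := by
    intro j S g hg hgmem
    have h1 : ContinuousOn (fun p : ℝ × ℝ => t0 + w j + g p * (a j - w j)) S :=
      (continuous_const.add (hg.mul continuous_const)).continuousOn
    have h2 := P.γext_continuousOn.comp h1
      (fun p hp => Bfun_arg_mem ht0 hw ha j (hgmem p hp))
    exact h2
  set D : Set (ℝ × ℝ) := Icc 0 1 ×ˢ Icc 0 1 with hD
  have hDmem : ∀ p : ℝ × ℝ, p ∈ D → p.1 ∈ Icc (0:ℝ) 1 ∧ p.2 ∈ Icc (0:ℝ) 1 := by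
    rintro ⟨s, t⟩ ⟨hs, ht⟩
    exact ⟨hs, ht⟩
  have hDc : IsClosed D := (isClosed_Icc.prod isClosed_Icc)
  have hR1 : IsClosed (D ∩ {p : ℝ × ℝ | p.2 ≤ p.1 / 4}) :=
    hDc.inter (isClosed_le continuous_snd (continuous_fst.div_const 4))
  have hR2 : IsClosed (D ∩ {p : ℝ × ℝ | p.1 / 4 ≤ p.2 ∧ p.2 ≤ 1 - p.1 / 4}) :=
    hDc.inter ((isClosed_le (continuous_fst.div_const 4) continuous_snd).inter
      (isClosed_le continuous_snd (continuous_const.sub (continuous_fst.div_const 4))))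
  have hR3 : IsClosed (D ∩ {p : ℝ × ℝ | 1 - p.1 / 4 ≤ p.2}) :=
    hDc.inter (isClosed_le (continuous_const.sub (continuous_fst.div_const 4)) continuous_snd)
  have hcover : D = (D ∩ {p : ℝ × ℝ | p.2 ≤ p.1 / 4})
      ∪ ((D ∩ {p : ℝ × ℝ | p.1 / 4 ≤ p.2 ∧ p.2 ≤ 1 - p.1 / 4})
      ∪ (D ∩ {p : ℝ × ℝ | 1 - p.1 / 4 ≤ p.2})) := by
    ext p
    constructor
    · intro hp
      rcases le_or_gt p.2 (p.1 / 4) with h | h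
      · exact Or.inl ⟨hp, h⟩
      rcases le_or_gt p.2 (1 - p.1 / 4) with h' | h'
      · exact Or.inr (Or.inl ⟨hp, h.le, h'⟩)
      · exact Or.inr (Or.inr ⟨hp, h'.le⟩)
    · rintro (h | h | h) <;> exact h.1
  have hc1 : ContinuousOn (fun p : ℝ × ℝ => FamF P t0 w a πp p.1 i p.2)
      (D ∩ {p : ℝ × ℝ | p.2 ≤ p.1 / 4}) := by
    refine (hBc i _ (fun p => p.1 - 4 * p.2)
      (continuous_fst.sub (continuous_const.mul continuous_snd)) ?_).congr ?_
    · rintro p ⟨hpD, hle⟩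
      obtain ⟨hs, ht⟩ := hDmem p hpD
      have hle' : p.2 ≤ p.1 / 4 := hle
      refine ⟨?_, ?_⟩ <;> linarith [ht.1, hs.1, hs.2]
    · rintro p ⟨hpD, hle⟩
      exact if_pos hle
  have hc2 : ContinuousOn (fun p : ℝ × ℝ => FamF P t0 w a πp p.1 i p.2)
      (D ∩ {p : ℝ × ℝ | p.1 / 4 ≤ p.2 ∧ p.2 ≤ 1 - p.1 / 4}) := by
    have hdenom : ∀ p : ℝ × ℝ, p ∈ D → (1 : ℝ) - p.1 / 2 ≠ 0 := by
      intro p hp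
      have := (hDmem p hp).1.2
      intro h
      linarith
    refine ContinuousOn.congr
      (f := fun p : ℝ × ℝ => πp i ((p.2 - p.1 / 4) / (1 - p.1 / 2))) ?_ ?_
    · apply (hπcont i).comp
      · exact ContinuousOn.div
          (continuous_snd.sub (continuous_fst.div_const 4)).continuousOn
          (continuous_const.sub (continuous_fst.div_const 2)).continuousOn
          (fun p hp => hdenom p hp.1)
      · rintro p ⟨hpD, h1, h2⟩
        obtain ⟨hs, ht⟩ := hDmem p hpD
        constructor
        · exact div_nonneg (by linarith) (by linarith [hs.2])
        · rw [div_le_one (by linarith [hs.2])]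
          linarith
    · rintro p ⟨hpD, h1, h2⟩
      obtain ⟨hs, ht⟩ := hDmem p hpD
      show FamF P t0 w a πp p.1 i p.2 = πp i ((p.2 - p.1 / 4) / (1 - p.1 / 2))
      unfold FamF
      by_cases hle : p.2 ≤ p.1 / 4
      · have heq : p.2 = p.1 / 4 := le_antisymm hle h1
        rw [if_pos hle]
        have e1 : p.1 - 4 * p.2 = 0 := by rw [heq]; ring
        have e2 : (p.2 - p.1 / 4) / (1 - p.1 / 2) = 0 := by
          rw [heq]
          simp
        rw [e1, e2, hπ0 i, Bfun_zero]
      · rw [if_neg hle, if_pos h2]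
  have hc3 : ContinuousOn (fun p : ℝ × ℝ => FamF P t0 w a πp p.1 i p.2)
      (D ∩ {p : ℝ × ℝ | 1 - p.1 / 4 ≤ p.2}) := by
    refine (hBc (i + 1) _ (fun p => 4 * p.2 - 4 + p.1)
      (((continuous_const.mul continuous_snd).sub continuous_const).add continuous_fst) ?_).congr ?_
    · rintro p ⟨hpD, hle⟩
      obtain ⟨hs, ht⟩ := hDmem p hpD
      have hle' : 1 - p.1 / 4 ≤ p.2 := hle
      refine ⟨?_, ?_⟩ <;> linarith [hs.1, ht.2, hs.2]
    · rintro p ⟨hpD, hle⟩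
      obtain ⟨hs, ht⟩ := hDmem p hpD
      have hle' : 1 - p.1 / 4 ≤ p.2 := hle
      show FamF P t0 w a πp p.1 i p.2 = Bfun P t0 w a (i + 1) (4 * p.2 - 4 + p.1)
      unfold FamF
      rw [if_neg (by push_neg; linarith [hs.2, hle'])]
      by_cases h2 : p.2 ≤ 1 - p.1 / 4
      · have heq : p.2 = 1 - p.1 / 4 := le_antisymm h2 hle
        rw [if_pos h2]
        have e1 : (p.2 - p.1 / 4) / (1 - p.1 / 2) = 1 := by
          rw [heq]
          rw [show 1 - p.1 / 4 - p.1 / 4 = 1 - p.1 / 2 by ring]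
          exact div_self (by intro h; linarith [hs.2])
        have e2 : 4 * p.2 - 4 + p.1 = 0 := by rw [heq]; ring
        rw [e1, e2, hπ1 i, Bfun_zero]
      · rw [if_neg h2]
  rw [hcover]
  exact glue_closed hR1 (hR2.union hR3) hc1 (glue_closed hR2 hR3 hc2 hc3)

end FamLemmas
section VarLemmas

open Set

variable {P : SimplePolygon} {t0 : ℝ} {w a : ℕ → ℝ} {πp : ℕ → ℝ → Plane}

private theorem Bfun_evar (ht0 : t0 ∈ Set.Ico 0 P.L)
    (hw : ∀ i, w i ∈ Set.Ico 0 P.L) (ha : ∀ i, a i ∈ Set.Icc 0 P.L) (j : ℕ) :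
    eVariationOn (Bfun P t0 w a j) (Icc 0 1) = ENNReal.ofReal |a j - w j| := by
  obtain ⟨hw1, hw2⟩ := hw j
  obtain ⟨ha1, ha2⟩ := ha j
  obtain ⟨ht1, ht2⟩ := ht0
  rcases lt_trichotomy (a j) (w j) with h | h | h
  · have e0 : EqOn (Bfun P t0 w a j)
        (P.γext ∘ (fun u => (t0 + w j) + (a j - w j) * u)) (Icc 0 1) := by
      intro u _
      exact congrArg P.γext (by ring)
    have hanti : AntitoneOn (fun u : ℝ => (t0 + w j) + (a j - w j) * u) (Icc 0 1) := by
      intro x _ y _ hxy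
      dsimp only
      nlinarith
    rw [eVariationOn.eq_of_eqOn e0, eVariationOn.comp_eq_of_antitoneOn _ _ hanti,
      affine_image_Icc_of_neg (by linarith) zero_le_one,
      show (t0 + w j) + (a j - w j) * 1 = t0 + a j by ring,
      show (t0 + w j) + (a j - w j) * 0 = t0 + w j by ring,
      P.γext_evar (by linarith) (by linarith) (by linarith),
      abs_of_neg (by linarith)]
    congr 1
    ring
  · have e0 : ∀ u, Bfun P t0 w a j u = P.γext (t0 + w j) := by
      intro u
      exact congrArg P.γext (by rw [h]; ring)
    rw [eVariationOn.constant_on (fun x hx y hy => ?_), h, sub_self, abs_zero,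
      ENNReal.ofReal_zero]
    obtain ⟨u, _, rfl⟩ := hx
    obtain ⟨v, _, rfl⟩ := hy
    rw [e0 u, e0 v]
  · have e0 : EqOn (Bfun P t0 w a j)
        (P.γext ∘ (fun u => (t0 + w j) + (a j - w j) * u)) (Icc 0 1) := by
      intro u _
      exact congrArg P.γext (by ring)
    have hmono : MonotoneOn (fun u : ℝ => (t0 + w j) + (a j - w j) * u) (Icc 0 1) := by
      intro x _ y _ hxy
      dsimp only
      nlinarith
    rw [eVariationOn.eq_of_eqOn e0, eVariationOn.comp_eq_of_monotoneOn _ _ hmono,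
      affine_image_Icc_of_pos (by linarith) zero_le_one,
      show (t0 + w j) + (a j - w j) * 0 = t0 + w j by ring,
      show (t0 + w j) + (a j - w j) * 1 = t0 + a j by ring,
      P.γext_evar (by linarith) (by linarith) (by linarith),
      abs_of_pos (by linarith)]
    congr 1
    ring

private theorem Fam_one_evar (ht0 : t0 ∈ Set.Ico 0 P.L)
    (hw : ∀ i, w i ∈ Set.Ico 0 P.L) (ha : ∀ i, a i ∈ Set.Icc 0 P.L)
    (hπ0 : ∀ i, πp i 0 = P.γext (t0 + w i))
    (hπ1 : ∀ i, πp i 1 = P.γext (t0 + w (i + 1)))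
    (i : ℕ) {D E : ℝ} (hD0 : 0 ≤ D)
    (hD : eVariationOn (πp i) (Icc 0 1) ≤ ENNReal.ofReal D)
    (hE1 : |a i - w i| ≤ E) (hE2 : |a (i + 1) - w (i + 1)| ≤ E) :
    eVariationOn (fun t => FamF P t0 w a πp 1 i t) (Icc 0 1)
      ≤ ENNReal.ofReal (E + (D + E)) := by
  set f : ℝ → Plane := fun t => FamF P t0 w a πp 1 i t with hf
  have split1 := eVariationOn.Icc_add_Icc (f := f) (s := Icc (0:ℝ) 1)
    (a := 0) (b := 1/4) (c := 1) (by norm_num) (by norm_num) (by constructor <;> norm_num)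
  have split2 := eVariationOn.Icc_add_Icc (f := f) (s := Icc (0:ℝ) 1)
    (a := 1/4) (b := 3/4) (c := 1) (by norm_num) (by norm_num)
    (by constructor <;> norm_num)
  have ii : ∀ u v : ℝ, 0 ≤ u → v ≤ 1 → Icc (0:ℝ) 1 ∩ Icc u v = Icc u v := by
    intro u v hu hv
    rw [Icc_inter_Icc, sup_eq_right.2 hu, inf_eq_right.2 hv]
  have i1 := ii 0 (1/4) le_rfl (by norm_num)
  have i2 := ii (1/4) 1 (by norm_num) le_rfl
  have i3 := ii 0 1 le_rfl le_rfl
  have i4 := ii (1/4) (3/4) (by norm_num) (by norm_num)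
  have i5 := ii (3/4) 1 (by norm_num) le_rfl
  simp only [i1, i2, i3] at split1
  simp only [i4, i5, i2] at split2
  -- piece 1
  have p1 : eVariationOn f (Icc 0 (1/4)) = ENNReal.ofReal |a i - w i| := by
    have e1 : EqOn f ((Bfun P t0 w a i) ∘ (fun t => 1 - 4 * t)) (Icc 0 (1/4)) := by
      intro t ht
      show FamF P t0 w a πp 1 i t = _
      unfold FamF
      rw [if_pos (by linarith [ht.2])]
      rfl
    have hanti : AntitoneOn (fun t : ℝ => 1 - 4 * t) (Icc 0 (1/4)) := by
      intro x _ y _ hxy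
      dsimp only
      linarith
    have himg : (fun t : ℝ => 1 - 4 * t) '' Icc 0 (1/4) = Icc (0:ℝ) 1 := by
      rw [show (fun t : ℝ => 1 - 4 * t) = (fun t : ℝ => 1 + (-4) * t) by funext t; ring,
        affine_image_Icc_of_neg (by norm_num) (by norm_num)]
      norm_num
    rw [eVariationOn.eq_of_eqOn e1, eVariationOn.comp_eq_of_antitoneOn _ _ hanti, himg,
      Bfun_evar ht0 hw ha i]
  -- piece 2
  have p2 : eVariationOn f (Icc (1/4) (3/4)) ≤ ENNReal.ofReal D := by
    have e2 : EqOn f ((πp i) ∘ (fun t => (t - 1/4) / (1 - 1/2))) (Icc (1/4) (3/4)) := by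
      intro t ht
      show FamF P t0 w a πp 1 i t = πp i ((t - 1/4) / (1 - 1/2))
      unfold FamF
      by_cases hle : t ≤ 1/4
      · have heq : t = 1/4 := le_antisymm hle ht.1
        rw [if_pos hle, heq]
        rw [show (1:ℝ) - 4 * (1/4) = 0 by norm_num, Bfun_zero,
          show ((1:ℝ)/4 - 1/4) / (1 - 1/2) = 0 by norm_num, hπ0 i]
      · rw [if_neg hle, if_pos (by linarith [ht.2])]
    have hmono : MonotoneOn (fun t : ℝ => (t - 1/4) / (1 - 1/2)) (Icc (1/4) (3/4)) := by
      intro x _ y _ hxy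
      dsimp only
      apply div_le_div_of_nonneg_right ?_ ?_ |>.trans_eq rfl
      · linarith
      · norm_num
    have himg : (fun t : ℝ => (t - 1/4) / (1 - 1/2)) '' Icc (1/4) (3/4) = Icc (0:ℝ) 1 := by
      rw [show (fun t : ℝ => (t - 1/4) / (1 - 1/2)) = (fun t : ℝ => (-1/2) + 2 * t) by
        funext t; field_simp; ring,
        affine_image_Icc_of_pos (by norm_num) (by norm_num)]
      norm_num
    rw [eVariationOn.eq_of_eqOn e2, eVariationOn.comp_eq_of_monotoneOn _ _ hmono, himg]
    exact hD
  -- piece 3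
  have p3 : eVariationOn f (Icc (3/4) 1) = ENNReal.ofReal |a (i+1) - w (i+1)| := by
    have e3 : EqOn f ((Bfun P t0 w a (i+1)) ∘ (fun t => 4 * t - 4 + 1)) (Icc (3/4) 1) := by
      intro t ht
      show FamF P t0 w a πp 1 i t = Bfun P t0 w a (i+1) (4 * t - 4 + 1)
      unfold FamF
      rw [if_neg (by push_neg; linarith [ht.1])]
      by_cases h2 : t ≤ 1 - 1/4
      · have heq : t = 3/4 := le_antisymm (by linarith) ht.1
        rw [if_pos h2, heq]
        rw [show ((3:ℝ)/4 - 1/4) / (1 - 1/2) = 1 by norm_num, hπ1 i,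
          show 4 * ((3:ℝ)/4) - 4 + 1 = 0 by norm_num, Bfun_zero]
      · rw [if_neg h2]
    have hmono : MonotoneOn (fun t : ℝ => 4 * t - 4 + 1) (Icc (3/4) 1) := by
      intro x _ y _ hxy
      dsimp only
      linarith
    have himg : (fun t : ℝ => 4 * t - 4 + 1) '' Icc (3/4) 1 = Icc (0:ℝ) 1 := by
      rw [show (fun t : ℝ => 4 * t - 4 + 1) = (fun t : ℝ => (-3) + 4 * t) by funext t; ring,
        affine_image_Icc_of_pos (by norm_num) (by norm_num)]
      norm_num
    rw [eVariationOn.eq_of_eqOn e3, eVariationOn.comp_eq_of_monotoneOn _ _ hmono, himg,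
      Bfun_evar ht0 hw ha (i+1)]
  have hE0 : 0 ≤ E := le_trans (abs_nonneg _) hE1
  calc eVariationOn f (Icc 0 1) = eVariationOn f (Icc 0 (1/4)) +
        (eVariationOn f (Icc (1/4) (3/4)) + eVariationOn f (Icc (3/4) 1)) := by
        rw [split2, split1]
    _ ≤ ENNReal.ofReal E + (ENNReal.ofReal D + ENNReal.ofReal E) := by
        apply add_le_add
        · rw [p1]; exact ENNReal.ofReal_le_ofReal hE1
        · exact add_le_add p2 (by rw [p3]; exact ENNReal.ofReal_le_ofReal hE2)
    _ = ENNReal.ofReal (E + (D + E)) := by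
        rw [ENNReal.ofReal_add hE0 (by positivity : (0:ℝ) ≤ D + E),
          ENNReal.ofReal_add hD0 hE0]

end VarLemmas
open Set in
theorem exists_X_solution (P : SimplePolygon) {d ε : ℝ} (hd : 0 < d) (hε : 0 < ε)
    {t0 : ℝ} (ht0 : t0 ∈ Set.Ico 0 P.L)
    (X : Finset ℝ) (hX0 : (0 : ℝ) ∈ X) (hXsub : ↑X ⊆ Set.Ico 0 P.L)
    (hgap : ∀ x ∈ X, ∀ b ∈ insert P.L X, x < b →
      (∀ c ∈ X, c ∉ Set.Ioo x b) → b - x ≤ ε)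
    {k : ℕ} {z : ℕ → Plane} {π : ℕ → ℝ → Plane}
    (hsol : P.IsSolution d k z π) {i0 : ℕ} (hi0 : i0 < k) (hzi0 : z i0 = P.γ t0) :
    ∃ (z' : ℕ → Plane) (π' : ℕ → ℝ → Plane),
      P.IsSolution (d + ε) k z' π' ∧ (∀ i < k, ∃ v ∈ X, z' i = P.γext (t0 + v)) ∧
      (∃ i < k, z' i = P.γ t0) := by
  classical
  obtain ⟨hkpos, hzmem, hpath, hvar, hencl⟩ := hsol
  obtain ⟨sn, hsn⟩ := snap_exists P hε X hX0 hXsub hgap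
  have hmodlt : ∀ i : ℕ, i % k < k := fun i => Nat.mod_lt i hkpos
  set πp : ℕ → ℝ → Plane := fun i => π (i % k) with hπpdef
  set w : ℕ → ℝ := fun i => if i % k = i0 then 0 else P.ordFrom t0 (z (i % k)) with hwdef
  set a : ℕ → ℝ := fun i => sn (w i) with hadef
  have one_mem : (1:ℝ) ∈ Icc (0:ℝ) 1 := ⟨zero_le_one, le_rfl⟩
  have hw : ∀ i, w i ∈ Set.Ico 0 P.L := by
    intro i
    simp only [hwdef]
    split_ifs with h
    · exact ⟨le_rfl, P.L_pos⟩
    · exact (P.ordFrom_spec ht0 (hzmem _ (hmodlt i))).1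
  have hwpt : ∀ i, P.γext (t0 + w i) = z (i % k) := by
    intro i
    simp only [hwdef]
    split_ifs with h
    · rw [add_zero, P.γext_eq_of_Icc ⟨ht0.1, ht0.2.le⟩, h, hzi0]
    · exact (P.ordFrom_spec ht0 (hzmem _ (hmodlt i))).2
  have hwmod : ∀ j, w (j % k) = w j := by
    intro j
    simp only [hwdef]
    rw [Nat.mod_mod_of_dvd j dvd_rfl]
  have hamod : ∀ j, a (j % k) = a j := fun j => by simp only [hadef]; rw [hwmod]
  have haIcc : ∀ i, a i ∈ Set.Icc 0 P.L := fun i => (hsn _ (hw i)).1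
  have habs : ∀ i, |a i - w i| ≤ ε / 2 := fun i => (hsn _ (hw i)).2.1
  have haX : ∀ i, a i ∈ X ∨ a i = P.L := fun i => (hsn _ (hw i)).2.2.1
  have hwi0 : w i0 = 0 := by
    simp only [hwdef]
    rw [if_pos (Nat.mod_eq_of_lt hi0)]
  have hai0 : a i0 = 0 := by
    simp only [hadef]
    rw [hwi0]
    exact (hsn 0 ⟨le_rfl, P.L_pos⟩).2.2.2 hX0
  have hπcont : ∀ i, ContinuousOn (πp i) (Icc 0 1) := fun i => (hpath _ (hmodlt i)).1
  have hπ0 : ∀ i, πp i 0 = P.γext (t0 + w i) := by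
    intro i
    rw [hwpt i]
    exact (hpath _ (hmodlt i)).2.1
  have hπ1 : ∀ i, πp i 1 = P.γext (t0 + w (i + 1)) := by
    intro i
    rw [hwpt (i + 1)]
    simp only [hπpdef]
    have := (hpath _ (hmodlt i)).2.2.1
    rw [this]
    exact congrArg z (Nat.ModEq.add_right 1 (Nat.mod_modEq i k))
  have hπimg : ∀ i, πp i '' Icc 0 1 ⊆ P.region := fun i => (hpath _ (hmodlt i)).2.2.2
  have hBk : Bfun P t0 w a k = Bfun P t0 w a 0 := by
    have h1 : w k = w 0 := by rw [← hwmod k, Nat.mod_self]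
    have h2 : a k = a 0 := by simp only [hadef]; rw [h1]
    funext u
    unfold Bfun
    rw [h1, h2]
  set z' : ℕ → Plane := fun i => P.γext (t0 + a i) with hz'def
  set π' : ℕ → ℝ → Plane := fun i t => FamF P t0 w a πp 1 i t with hπ'def
  set GG : ℝ × ℝ → Plane :=
    fun p => concatLoop k (fun j t => FamF P t0 w a πp p.1 j t) p.2 with hGGdef
  have hGcont : ContinuousOn GG (Icc 0 1 ×ˢ Icc 0 1) :=
    strip_cont hkpos (fun j s t => FamF P t0 w a πp s j t)
      (fun i _ => Fam_cont ht0 hw haIcc hπcont hπ0 hπ1 i)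
      (fun i _ s hs => (Fam_end hπ1 hs i).trans (Fam_start hs (i + 1)).symm)
  have hGmem : ∀ p : ℝ × ℝ, p ∈ (Icc 0 1 ×ˢ Icc 0 1 : Set (ℝ × ℝ)) → GG p ∈ P.region := by
    rintro ⟨s, t⟩ ⟨hs, ht⟩
    exact concat_mem hkpos (fun i _ u hu => Fam_mem hπimg i hs hu) t ht
  refine ⟨z', π', ⟨hkpos, fun i _ => P.γext_mem _, ?_, ?_, ?_⟩, ?_, ⟨i0, hi0, ?_⟩⟩
  · -- paths
    intro i hik
    refine ⟨?_, ?_, ?_, ?_⟩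
    · have hcomp := (Fam_cont (πp := πp) ht0 hw haIcc hπcont hπ0 hπ1 i).comp
        ((continuous_const.prodMk continuous_id).continuousOn
          (s := Icc (0:ℝ) 1))
        (fun t ht => Set.mk_mem_prod one_mem ht)
      exact hcomp
    · exact (Fam_start one_mem i).trans (Bfun_one i)
    · simp only [hπ'def, hz'def]
      rw [(Fam_end hπ1 one_mem i).trans (Bfun_one (i + 1))]
      rw [hamod (i + 1)]
    · rintro x ⟨u, hu, rfl⟩
      exact Fam_mem hπimg i one_mem hu
  · -- lengths
    intro i hik
    have := Fam_one_evar ht0 hw haIcc hπ0 hπ1 i hd.le (hvar _ (hmodlt i))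
      (habs i) (habs (i + 1))
    calc eVariationOn (π' i) (Icc 0 1) ≤ ENNReal.ofReal (ε/2 + (d + ε/2)) := this
      _ = ENNReal.ofReal (d + ε) := by congr 1; ring
  · -- enclosure
    intro q hq hNH
    obtain ⟨hq1, hq2⟩ := hq
    have hqreg : q ∉ P.region := by
      rintro (h | h)
      · exact hq1 h
      · exact h.2 hq2
    obtain ⟨H', hc, himg, h0, hloop, c, hconst⟩ := hNH
    refine hencl q ⟨hq1, hq2⟩
      ⟨fun p => if p.1 ≤ 1/2 then GG (2 * p.1, p.2) else H' (2 * p.1 - 1, p.2),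
        ?_, ?_, ?_, ?_, c, ?_⟩
    · -- continuity
      have hcover : (Icc 0 1 ×ˢ Icc 0 1 : Set (ℝ × ℝ))
          = (Icc 0 (1/2) ×ˢ Icc 0 1) ∪ (Icc (1/2) 1 ×ˢ Icc 0 1) := by
        rw [← Set.union_prod, Set.Icc_union_Icc_eq_Icc (by norm_num) (by norm_num)]
      rw [hcover]
      apply glue_closed (isClosed_Icc.prod isClosed_Icc) (isClosed_Icc.prod isClosed_Icc)
      · refine ContinuousOn.congr (f := fun p : ℝ × ℝ => GG (2 * p.1, p.2)) ?_ ?_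
        · apply hGcont.comp
          · exact ((continuous_const.mul continuous_fst).prodMk continuous_snd).continuousOn
          · rintro ⟨s, t⟩ ⟨hs, ht⟩
            simp only [Set.mem_prod, Set.mem_Icc]
            exact ⟨⟨by linarith [hs.1], by linarith [hs.2]⟩, ht.1, ht.2⟩
        · rintro ⟨s, t⟩ ⟨hs, ht⟩
          exact if_pos hs.2
      · refine ContinuousOn.congr (f := fun p : ℝ × ℝ => H' (2 * p.1 - 1, p.2)) ?_ ?_
        · apply hc.comp
          · exact (((continuous_const.mul continuous_fst).sub continuous_const).prodMk
              continuous_snd).continuousOn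
          · rintro ⟨s, t⟩ ⟨hs, ht⟩
            simp only [Set.mem_prod, Set.mem_Icc]
            exact ⟨⟨by linarith [hs.1], by linarith [hs.2]⟩, ht.1, ht.2⟩
        · rintro ⟨s, t⟩ ⟨hs, ht⟩
          by_cases h : s ≤ 1/2
          · have hs12 : s = 1/2 := le_antisymm h hs.1
            have e1 : ((2:ℝ) * s, t) = ((1:ℝ), t) := by rw [hs12]; norm_num
            have e2 : ((2:ℝ) * s - 1, t) = ((0:ℝ), t) := by rw [hs12]; norm_num
            show (if s ≤ 1/2 then GG (2 * s, t) else H' (2 * s - 1, t)) = H' (2 * s - 1, t)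
            rw [if_pos h, e1, e2, h0 t ht]
          · show (if s ≤ 1/2 then GG (2 * s, t) else H' (2 * s - 1, t)) = H' (2 * s - 1, t)
            rw [if_neg h]
    · -- image
      rintro x ⟨p, hp, rfl⟩
      obtain ⟨hs, ht⟩ := hp
      dsimp only
      split_ifs with h
      · have hp' : ((2 * p.1, p.2) : ℝ × ℝ) ∈ (Icc 0 1 ×ˢ Icc 0 1 : Set (ℝ × ℝ)) := by
          simp only [Set.mem_prod, Set.mem_Icc]
          exact ⟨⟨by linarith [hs.1], by linarith⟩, ht.1, ht.2⟩
        intro hx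
        exact hqreg (hx ▸ hGmem _ hp')
      · apply himg
        refine ⟨(2 * p.1 - 1, p.2), ?_, rfl⟩
        push_neg at h
        simp only [Set.mem_prod, Set.mem_Icc]
        exact ⟨⟨by linarith, by linarith [hs.2]⟩, ht.1, ht.2⟩
    · -- H(0, t) = loop
      intro t ht
      dsimp only
      rw [if_pos (by norm_num : (0:ℝ) ≤ 1/2), show ((2:ℝ) * 0) = 0 by norm_num]
      simp only [hGGdef]
      refine (concat_congr hkpos ?_ t ht)
      intro i hik u hu
      show FamF P t0 w a πp 0 i u = π i u
      rw [Fam_zero hπ0 i hu]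
      simp only [hπpdef]
      rw [Nat.mod_eq_of_lt hik]
    · -- loop condition
      intro s hs
      dsimp only
      split_ifs with h
      · have h2s : (2 * s) ∈ Icc (0:ℝ) 1 := ⟨by linarith [hs.1], by linarith⟩
        have e0 : GG (2 * s, 0) = Bfun P t0 w a 0 (2 * s) := by
          simp only [hGGdef]
          rw [concat_zero]
          exact Fam_start h2s 0
        have e1 : GG (2 * s, 1) = Bfun P t0 w a k (2 * s) := by
          simp only [hGGdef]
          rw [concat_one hkpos]
          have hend := Fam_end (a := a) hπ1 h2s (k - 1)
          rw [Nat.sub_add_cancel hkpos] at hend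
          exact hend
        rw [e0, e1, hBk]
      · exact hloop (2 * s - 1) ⟨by linarith [not_le.1 h], by linarith [hs.2]⟩
    · -- constant at s = 1
      intro t ht
      dsimp only
      rw [if_neg (by norm_num : ¬(1:ℝ) ≤ 1/2), show (2:ℝ) * 1 - 1 = 1 by norm_num]
      exact hconst t ht
  · -- stations in X
    intro i hik
    rcases haX i with h | h
    · exact ⟨a i, h, rfl⟩
    · refine ⟨0, hX0, ?_⟩
      simp only [hz'def]
      rw [h, add_zero, P.γext_eq_of_Icc ⟨ht0.1, ht0.2.le⟩,
        P.γext_eq_of_Icc' ⟨by linarith [ht0.1], by linarith [ht0.2]⟩]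
      congr 1
      ring
  · -- contains s0
    simp only [hz'def]
    rw [hai0, add_zero, P.γext_eq_of_Icc ⟨ht0.1, ht0.2.le⟩]
/-- **discretization certificate.** Let `P` be a simple
polygon, `d > 0`, `ε > 0`, and let `s_0 = γ t0` lie on the boundary of the
convex hull of `P`.  Let `X` be a finite set of clockwise boundary offsets
(from `t0`) containing `0` (i.e. the point `s_0`) and every vertex of `P`,
such that any two consecutive points of `X` along `P` are at boundary
distance at most `ε`.  Suppose there is a solution for range `d` containing
`s_0`, and let `k` be the minimum number of stations among all such
solutions.  Then:
(i) every solution for range `d` whose stations all lie in `X` and include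
`s_0` has at least `k` stations;
(ii) there is a solution for range `d + ε` whose stations all lie in `X`,
include `s_0`, and number at most `k`; and in particular,
(iii) if the minimum numbers of stations among `X`-station solutions
containing `s_0` for ranges `d` and `d + ε` are equal, then this common
value equals `k`. -/
theorem discretization_certificate (P : SimplePolygon) (d ε : ℝ)
    (hd : 0 < d) (hε : 0 < ε)
    (t0 : ℝ) (ht0 : t0 ∈ Set.Ico 0 P.L)
    (hch : P.γ t0 ∈ frontier (convexHull ℝ P.toSet))
    (X : Finset ℝ) (hX0 : (0 : ℝ) ∈ X) (hXsub : ↑X ⊆ Set.Ico 0 P.L)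
    (hXvert : ∀ u ∈ P.vparams, ∃ w ∈ X, P.γext (t0 + w) = P.γ u)
    (hgap : ∀ a ∈ X, ∀ b ∈ insert P.L X, a < b →
      (∀ c ∈ X, c ∉ Set.Ioo a b) → b - a ≤ ε)
    (hex : ∃ (n : ℕ) (z : ℕ → Plane) (π : ℕ → ℝ → Plane),
      P.IsSolution d n z π ∧ ∃ i < n, z i = P.γ t0)
    (k : ℕ)
    (hk : IsLeast {n : ℕ | ∃ (z : ℕ → Plane) (π : ℕ → ℝ → Plane),
      P.IsSolution d n z π ∧ ∃ i < n, z i = P.γ t0} k) :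
    (∀ (n : ℕ) (z : ℕ → Plane) (π : ℕ → ℝ → Plane),
      P.IsSolution d n z π →
      (∀ i < n, ∃ w ∈ X, z i = P.γext (t0 + w)) →
      (∃ i < n, z i = P.γ t0) → k ≤ n) ∧
    (∃ (n : ℕ) (z : ℕ → Plane) (π : ℕ → ℝ → Plane),
      P.IsSolution (d + ε) n z π ∧
      (∀ i < n, ∃ w ∈ X, z i = P.γext (t0 + w)) ∧
      (∃ i < n, z i = P.γ t0) ∧ n ≤ k) ∧
    (∀ m m' : ℕ,
      IsLeast {n : ℕ | ∃ (z : ℕ → Plane) (π : ℕ → ℝ → Plane),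
        P.IsSolution d n z π ∧
        (∀ i < n, ∃ w ∈ X, z i = P.γext (t0 + w)) ∧
        ∃ i < n, z i = P.γ t0} m →
      IsLeast {n : ℕ | ∃ (z : ℕ → Plane) (π : ℕ → ℝ → Plane),
        P.IsSolution (d + ε) n z π ∧
        (∀ i < n, ∃ w ∈ X, z i = P.γext (t0 + w)) ∧
        ∃ i < n, z i = P.γ t0} m' →
      m = m' → m = k) := by
  obtain ⟨z, π, hsol, i0, hi0, hzi0⟩ := hk.1
  obtain ⟨z2, π2, hsol2, hX2, hs02⟩ :=
    exists_X_solution P hd hε ht0 X hX0 hXsub hgap hsol hi0 hzi0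
  refine ⟨?_, ⟨k, z2, π2, hsol2, hX2, hs02, le_rfl⟩, ?_⟩
  · intro n z' π' hsol' _ hs0'
    exact hk.2 ⟨z', π', hsol', hs0'⟩
  · intro m m' hm hm' hmm
    have h1 : k ≤ m := by
      obtain ⟨zz, ππ, hh1, _, hh3⟩ := hm.1
      exact hk.2 ⟨zz, ππ, hh1, hh3⟩
    have h2 : m' ≤ k := hm'.2 ⟨z2, π2, hsol2, hX2, hs02⟩
    omega
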